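/- arXiv:1512.07106 — 3 statements merged into one kernel-verified Lean document; each statement's English description precedes it below -/
import Mathlib

section
/- Let W = ⊗_{j=1}^n T_j^{PA_j I_j} where each T_j is diagonal in a fixed product (pointer) basis with nonnegative diagonal entries P(z_j | pa_j) summing to 1 over z_j for each pa_j. Let each local operation be diagonal of the form M̄_{x_j|i_j} = Σ_{z_j, o_j} P(o_j | x_j) P(x_j | z_j, i_j) |z_j⟩⟨z_j| ⊗ |o_j⟩⟨o_j|, with conditional probabilities factorising as P(o_j, x_j | z_j, i_j) = P(o_j|x_j)P(x_j|z_j,i_j). Then the resulting probability P(x_1,…,x_n | i_1,…,i_n) = Tr[⊗_j M̄_{x_j|i_j} · W] equals the product Π_j P(x_j | pa_j, i_j), where pa_j denotes the tuple of outcomes x_k at the parent laboratories of j in the DAG; i.e., the classical causal Markov condition holds. -/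
open Matrix BigOperators

section Aux

variable {n : ℕ} {E : Finset (Fin n × Fin n)}

/-- Edges grouped by source node are in bijection with edges. -/
def sigmaOutEquiv (E : Finset (Fin n × Fin n)) :
    (Σ j : Fin n, {e : Fin n × Fin n // e ∈ E ∧ e.1 = j}) ≃ {e : Fin n × Fin n // e ∈ E} where
  toFun p := ⟨p.2.1, p.2.2.1⟩
  invFun e := ⟨e.1.1, e.1, e.2, rfl⟩
  left_inv := by rintro ⟨j, ⟨e, he, rfl⟩⟩; rfl
  right_inv := by rintro ⟨e, he⟩; rfl

/-- Edges grouped by target node are in bijection with edges. -/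
def sigmaInEquiv (E : Finset (Fin n × Fin n)) :
    (Σ j : Fin n, {e : Fin n × Fin n // e ∈ E ∧ e.2 = j}) ≃ {e : Fin n × Fin n // e ∈ E} where
  toFun p := ⟨p.2.1, p.2.2.1⟩
  invFun e := ⟨e.1.2, e.1, e.2, rfl⟩
  left_inv := by rintro ⟨j, ⟨e, he, rfl⟩⟩; rfl
  right_inv := by rintro ⟨e, he⟩; rfl

/-- A product over all nodes of products over outgoing edges equals the
corresponding product grouped by incoming edges. -/
lemma prod_out_eq_prod_in {M : Type*} [CommMonoid M]
    (F : ∀ e : Fin n × Fin n, e ∈ E → M) :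
    (∏ j : Fin n, ∏ eo : {e : Fin n × Fin n // e ∈ E ∧ e.1 = j}, F eo.1 eo.2.1)
      = ∏ j : Fin n, ∏ ei : {e : Fin n × Fin n // e ∈ E ∧ e.2 = j}, F ei.1 ei.2.1 := by
  have h1 : (∏ j : Fin n, ∏ eo : {e : Fin n × Fin n // e ∈ E ∧ e.1 = j}, F eo.1 eo.2.1)
      = ∏ p : Σ j : Fin n, {e : Fin n × Fin n // e ∈ E ∧ e.1 = j}, F p.2.1 p.2.2.1 := by
    rw [← Finset.univ_sigma_univ, Finset.prod_sigma]
  have h2 : (∏ j : Fin n, ∏ ei : {e : Fin n × Fin n // e ∈ E ∧ e.2 = j}, F ei.1 ei.2.1)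
      = ∏ p : Σ j : Fin n, {e : Fin n × Fin n // e ∈ E ∧ e.2 = j}, F p.2.1 p.2.2.1 := by
    rw [← Finset.univ_sigma_univ, Finset.prod_sigma]
  rw [h1, h2]
  exact (Fintype.prod_equiv (sigmaOutEquiv E) _
      (fun e : {e : Fin n × Fin n // e ∈ E} => F e.1 e.2) (fun p => rfl)).trans
    (Fintype.prod_equiv (sigmaInEquiv E) _
      (fun e : {e : Fin n × Fin n // e ∈ E} => F e.1 e.2) (fun p => rfl)).symm

/-- Regrouping the classical registers: values on outgoing edges, grouped by
source, are the same data as values on incoming edges, grouped by target. -/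
def nodeEquiv (E : Finset (Fin n × Fin n)) (X Z : Fin n → Type) :
    (∀ j : Fin n, Z j × (∀ _e : {e : Fin n × Fin n // e ∈ E ∧ e.1 = j}, X j))
      ≃ (∀ j : Fin n, Z j × (∀ e : {e : Fin n × Fin n // e ∈ E ∧ e.2 = j}, X e.1.1)) where
  toFun a j := ((a j).1, fun e => (a e.1.1).2 ⟨e.1, e.2.1, rfl⟩)
  invFun b j := ((b j).1, fun e => e.2.2 ▸ (b e.1.2).2 ⟨e.1, e.2.1, rfl⟩)
  left_inv a := by
    funext j
    refine Prod.ext rfl ?_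
    funext e
    obtain ⟨⟨k, l⟩, he, (hk : k = j)⟩ := e
    subst hk
    rfl
  right_inv b := by
    funext j
    refine Prod.ext rfl ?_
    funext e
    obtain ⟨⟨k, l⟩, he, (hl : l = j)⟩ := e
    subst hl
    rfl

end Aux

/-- Classical limit of a Markov quantum causal model: for a process matrix
`W = ⊗_j T_j^{PA_j I_j}` with each `T_j` diagonal in a fixed pointer basis (with
diagonal entries `P(z_j | pa_j)`), and local operations diagonal of the form
`M̄_{x_j|i_j} = Σ_{z_j,o_j} P(o_j | x_j) P(x_j | z_j, i_j) |z_j⟩⟨z_j| ⊗ |o_j⟩⟨o_j|`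
(with the outputs along different outgoing edges independent given `x_j`), the
resulting probability `P(x|i) = Tr[⊗_j M̄_{x_j|i_j} · W]` factorises as
`Π_j Q_j(x_j | pa_j, i_j)` for conditional probabilities `Q_j`, where `pa_j` is the
tuple of outcomes at the parent laboratories: the classical causal Markov condition
holds for a DAG isomorphic to the quantum one. -/
theorem classical_limit_markov_condition
    (n : ℕ) (E : Finset (Fin n × Fin n))
    (hacyclic : ∃ r : Fin n → ℕ, ∀ e ∈ E, r e.1 < r e.2)
    (X Z I : Fin n → Type)
    [∀ j, Fintype (X j)] [∀ j, DecidableEq (X j)]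
    [∀ j, Fintype (Z j)] [∀ j, DecidableEq (Z j)]
    -- mechanisms P(z_j | pa_j)
    (Pz : ∀ j : Fin n,
      (∀ e : {e : Fin n × Fin n // e ∈ E ∧ e.2 = j}, X e.1.1) → Z j → ℝ)
    (hPz0 : ∀ j pa z, 0 ≤ Pz j pa z)
    (hPz1 : ∀ j pa, ∑ z, Pz j pa z = 1)
    -- per-edge output distributions P(s_e | x_j)
    (Po : ∀ j : Fin n, ∀ _e : {e : Fin n × Fin n // e ∈ E ∧ e.1 = j}, X j → X j → ℝ)
    (hPo0 : ∀ j e s x, 0 ≤ Po j e s x)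
    (hPo1 : ∀ j e x, ∑ s, Po j e s x = 1)
    -- measurement-outcome distributions P(x_j | z_j, i_j)
    (Px : ∀ j : Fin n, Z j → I j → X j → ℝ)
    (hPx0 : ∀ j z i x, 0 ≤ Px j z i x)
    (hPx1 : ∀ j z i, ∑ x, Px j z i x = 1)
    -- the local diagonal operations M̄_{x_j|i_j}
    (Mloc : ∀ j : Fin n, X j → I j →
      Matrix (Z j × (∀ _e : {e : Fin n × Fin n // e ∈ E ∧ e.1 = j}, X j))
             (Z j × (∀ _e : {e : Fin n × Fin n // e ∈ E ∧ e.1 = j}, X j)) ℂ)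
    (hMloc : ∀ j xj ij, Mloc j xj ij =
      Matrix.diagonal (fun p =>
        (((∏ e, Po j e (p.2 e) xj) * Px j p.1 ij xj : ℝ) : ℂ)))
    -- the diagonal process matrix W = ⊗_j T_j
    (W : Matrix
      (∀ j : Fin n, Z j × (∀ _e : {e : Fin n × Fin n // e ∈ E ∧ e.1 = j}, X j))
      (∀ j : Fin n, Z j × (∀ _e : {e : Fin n × Fin n // e ∈ E ∧ e.1 = j}, X j)) ℂ)
    (hW : ∀ a b, W a b = if a = b then
      (((∏ j : Fin n,
        Pz j (fun e => (a e.1.1).2 ⟨e.1, e.2.1, rfl⟩) (a j).1 : ℝ)) : ℂ)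
      else 0) :
    ∃ Q : ∀ j : Fin n,
        (∀ e : {e : Fin n × Fin n // e ∈ E ∧ e.2 = j}, X e.1.1) → I j → X j → ℝ,
      (∀ j pa i x, 0 ≤ Q j pa i x) ∧
      (∀ j pa i, ∑ x, Q j pa i x = 1) ∧
      (∀ (x : ∀ j, X j) (i : ∀ j, I j),
        ((Matrix.of fun (a b : ∀ j : Fin n, Z j ×
            (∀ _e : {e : Fin n × Fin n // e ∈ E ∧ e.1 = j}, X j)) =>
          ∏ j : Fin n, Mloc j (x j) (i j) (a j) (b j)) * W).trace
        = ∏ j : Fin n, ((Q j (fun e => x e.1.1) (i j) (x j) : ℝ) : ℂ)) := by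
  classical
  refine ⟨fun j pa i x =>
      ∑ p : Z j × (∀ e : {e : Fin n × Fin n // e ∈ E ∧ e.2 = j}, X e.1.1),
        (∏ e, Po e.1.1 ⟨e.1, e.2.1, rfl⟩ (p.2 e) (pa e)) * Px j p.1 i x * Pz j p.2 p.1,
    ?_, ?_, ?_⟩
  · intro j pa i x
    refine Finset.sum_nonneg fun p _ => ?_
    exact mul_nonneg (mul_nonneg (Finset.prod_nonneg fun e _ => hPo0 _ _ _ _)
      (hPx0 _ _ _ _)) (hPz0 _ _ _)
  · intro j pa i
    rw [Finset.sum_comm]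
    have h1 : ∀ p : Z j × (∀ e : {e : Fin n × Fin n // e ∈ E ∧ e.2 = j}, X e.1.1),
        ∑ x, (∏ e, Po e.1.1 ⟨e.1, e.2.1, rfl⟩ (p.2 e) (pa e)) * Px j p.1 i x * Pz j p.2 p.1
          = (∏ e, Po e.1.1 ⟨e.1, e.2.1, rfl⟩ (p.2 e) (pa e)) * Pz j p.2 p.1 := by
      intro p
      rw [← Finset.sum_mul, ← Finset.mul_sum, hPx1, mul_one]
    simp only [h1]
    rw [Fintype.sum_prod_type_right]
    simp only [← Finset.mul_sum, hPz1, mul_one]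
    have h2 := Fintype.prod_sum
      (fun (e : {e : Fin n × Fin n // e ∈ E ∧ e.2 = j}) (t : X e.1.1) =>
        Po e.1.1 ⟨e.1, e.2.1, rfl⟩ t (pa e))
    rw [← h2]
    simp [hPo1]
  · intro x i
    have htr : ((Matrix.of fun (a b : ∀ j : Fin n, Z j ×
            (∀ _e : {e : Fin n × Fin n // e ∈ E ∧ e.1 = j}, X j)) =>
          ∏ j : Fin n, Mloc j (x j) (i j) (a j) (b j)) * W).trace
        = ∑ a : ∀ j : Fin n, Z j × (∀ _e : {e : Fin n × Fin n // e ∈ E ∧ e.1 = j}, X j),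
            (∏ j : Fin n, (((∏ e, Po j e ((a j).2 e) (x j)) * Px j (a j).1 (i j) (x j) : ℝ) : ℂ))
            * ((∏ j : Fin n, Pz j (fun e => (a e.1.1).2 ⟨e.1, e.2.1, rfl⟩) (a j).1 : ℝ) : ℂ) := by
      rw [Matrix.trace]
      refine Finset.sum_congr rfl fun a _ => ?_
      rw [Matrix.diag_apply, Matrix.mul_apply,
        Finset.sum_eq_single a (fun b _ hb => by rw [hW]; simp [hb]) (by simp)]
      rw [hW, if_pos rfl, Matrix.of_apply]
      congr 1
      refine Finset.prod_congr rfl fun j _ => ?_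
      rw [hMloc, Matrix.diagonal_apply_eq]
    rw [htr]
    have key : (∑ a : ∀ j : Fin n, Z j × (∀ _e : {e : Fin n × Fin n // e ∈ E ∧ e.1 = j}, X j),
          (∏ j : Fin n, (∏ e, Po j e ((a j).2 e) (x j)) * Px j (a j).1 (i j) (x j))
          * (∏ j : Fin n, Pz j (fun e => (a e.1.1).2 ⟨e.1, e.2.1, rfl⟩) (a j).1) : ℝ)
        = ∏ j : Fin n,
            ∑ p : Z j × (∀ e : {e : Fin n × Fin n // e ∈ E ∧ e.2 = j}, X e.1.1),
              (∏ e, Po e.1.1 ⟨e.1, e.2.1, rfl⟩ (p.2 e) (x e.1.1)) * Px j p.1 (i j) (x j)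
                * Pz j p.2 p.1 := by
      rw [Fintype.prod_sum, ← Equiv.sum_comp (nodeEquiv E X Z)]
      refine Finset.sum_congr rfl fun a _ => ?_
      show (∏ j : Fin n, (∏ e, Po j e ((a j).2 e) (x j)) * Px j (a j).1 (i j) (x j))
          * (∏ j : Fin n, Pz j (fun e => (a e.1.1).2 ⟨e.1, e.2.1, rfl⟩) (a j).1)
        = ∏ j : Fin n,
            (∏ e : {e : Fin n × Fin n // e ∈ E ∧ e.2 = j},
              Po e.1.1 ⟨e.1, e.2.1, rfl⟩ ((a e.1.1).2 ⟨e.1, e.2.1, rfl⟩) (x e.1.1))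
            * Px j (a j).1 (i j) (x j)
            * Pz j (fun e => (a e.1.1).2 ⟨e.1, e.2.1, rfl⟩) (a j).1
      rw [Finset.prod_mul_distrib, Finset.prod_mul_distrib, Finset.prod_mul_distrib]
      have hA : (∏ j : Fin n, ∏ e : {e : Fin n × Fin n // e ∈ E ∧ e.1 = j},
            Po j e ((a j).2 e) (x j))
          = ∏ j : Fin n, ∏ e : {e : Fin n × Fin n // e ∈ E ∧ e.2 = j},
              Po e.1.1 ⟨e.1, e.2.1, rfl⟩ ((a e.1.1).2 ⟨e.1, e.2.1, rfl⟩) (x e.1.1) := by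
        have := prod_out_eq_prod_in (E := E)
          (fun e he => Po e.1 ⟨e, he, rfl⟩ ((a e.1).2 ⟨e, he, rfl⟩) (x e.1))
        rw [← this]
        refine Finset.prod_congr rfl fun j _ => Finset.prod_congr rfl fun eo _ => ?_
        obtain ⟨⟨k, l⟩, he, (hk : k = j)⟩ := eo
        subst hk
        rfl
      rw [hA]
    calc (∑ a : ∀ j : Fin n, Z j × (∀ _e : {e : Fin n × Fin n // e ∈ E ∧ e.1 = j}, X j),
            (∏ j : Fin n, (((∏ e, Po j e ((a j).2 e) (x j)) * Px j (a j).1 (i j) (x j) : ℝ) : ℂ))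
            * ((∏ j : Fin n, Pz j (fun e => (a e.1.1).2 ⟨e.1, e.2.1, rfl⟩) (a j).1 : ℝ) : ℂ))
        = ((∑ a : ∀ j : Fin n, Z j × (∀ _e : {e : Fin n × Fin n // e ∈ E ∧ e.1 = j}, X j),
            (∏ j : Fin n, (∏ e, Po j e ((a j).2 e) (x j)) * Px j (a j).1 (i j) (x j))
            * (∏ j : Fin n, Pz j (fun e => (a e.1.1).2 ⟨e.1, e.2.1, rfl⟩) (a j).1) : ℝ) : ℂ) := by
          push_cast
          ring_nf
      _ = _ := by rw [key]; push_cast; rfl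
end

section
/- For discrete random variables: if conditional probabilities P(o_j, x_j | z_j, i_j) factorise as P(o_j | x_j) P(x_j | z_j, i_j) and the latent mechanism gives P(z_j | pa_j) where pa_j is a function of the outputs {o_k} of parent nodes, then Σ_{o, z} Π_j P(o_j, x_j | z_j, i_j) P(z_j | pa_j) = Π_j P(x_j | pa_j(x), i_j), where pa_j(x) substitutes each parent output variable by the parent's observed value x_k (using that Σ_{o_j} with P(o_j | x_j) concentrated appropriately marginalises to substitution). -/
open BigOperators

/-- The classical-probability core of the quantum-to-classical limit theorem.
For discrete random variables: if conditional probabilities factorise as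
`P(o_j, x_j | z_j, i_j) = P(o_j | x_j) P(x_j | z_j, i_j)` with
`P(o_j | x_j)` the Kronecker delta broadcasting `x_j` along the outgoing edges of
node `j`, and the latent mechanism gives `P(z_j | pa_j)` where `pa_j` collects the
outputs of the parent nodes, then
`Σ_{o,z} Π_j P(o_j, x_j | z_j, i_j) P(z_j | pa_j(o)) = Π_j P(x_j | pa_j(x), i_j)`,
with `P(x_j | pa, i) := Σ_z P(x_j | z, i) P(z | pa)` and `pa_j(x)` obtained by
substituting each parent output by the parent's observed value. -/
theorem classical_markov_core
    (n : ℕ) (E : Finset (Fin n × Fin n))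
    (hacyclic : ∃ r : Fin n → ℕ, ∀ e ∈ E, r e.1 < r e.2)
    (X Z I : Fin n → Type)
    [∀ j, Fintype (X j)] [∀ j, DecidableEq (X j)] [∀ j, Fintype (Z j)]
    (Pz : ∀ j : Fin n,
      (∀ e : {e : Fin n × Fin n // e ∈ E ∧ e.2 = j}, X e.1.1) → Z j → ℝ)
    (hPz0 : ∀ j pa z, 0 ≤ Pz j pa z)
    (hPz1 : ∀ j pa, ∑ z, Pz j pa z = 1)
    (Px : ∀ j : Fin n, Z j → I j → X j → ℝ)
    (hPx0 : ∀ j z i x, 0 ≤ Px j z i x)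
    (hPx1 : ∀ j z i, ∑ x, Px j z i x = 1)
    (x : ∀ j, X j) (i : ∀ j, I j) :
    (∑ o : ∀ j : Fin n, (∀ _e : {e : Fin n × Fin n // e ∈ E ∧ e.1 = j}, X j),
      ∑ z : ∀ j, Z j,
      ∏ j : Fin n,
        (if ∀ e, o j e = x j then (1 : ℝ) else 0) *
        Px j (z j) (i j) (x j) *
        Pz j (fun e => o e.1.1 ⟨e.1, e.2.1, rfl⟩) (z j))
    = ∏ j : Fin n,
        ∑ zj : Z j, Px j zj (i j) (x j) * Pz j (fun e => x e.1.1) zj := by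
  classical
  set o₀ : ∀ j : Fin n, (∀ _e : {e : Fin n × Fin n // e ∈ E ∧ e.1 = j}, X j) :=
    fun j _ => x j with ho₀
  have key : ∀ o : ∀ j : Fin n, (∀ _e : {e : Fin n × Fin n // e ∈ E ∧ e.1 = j}, X j),
      (∑ z : ∀ j, Z j,
        ∏ j : Fin n,
          (if ∀ e, o j e = x j then (1 : ℝ) else 0) *
          Px j (z j) (i j) (x j) *
          Pz j (fun e => o e.1.1 ⟨e.1, e.2.1, rfl⟩) (z j))
      = if o = o₀ then
          ∑ z : ∀ j, Z j, ∏ j : Fin n,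
            Px j (z j) (i j) (x j) * Pz j (fun e => x e.1.1) (z j)
        else 0 := by
    intro o
    by_cases h : o = o₀
    · subst h
      simp only [if_pos rfl]
      refine Finset.sum_congr rfl fun z _ => Finset.prod_congr rfl fun j _ => ?_
      simp [ho₀]
    · rw [if_neg h]
      refine Finset.sum_eq_zero fun z _ => ?_
      have : ∃ j, o j ≠ o₀ j := by
        by_contra hc
        push_neg at hc
        exact h (funext hc)
      obtain ⟨j, hj⟩ := this
      have : ∃ e, o j e ≠ x j := by
        by_contra hc
        push_neg at hc
        exact hj (funext fun e => hc e)
      refine Finset.prod_eq_zero (Finset.mem_univ j) ?_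
      rw [if_neg (by intro hall; obtain ⟨e, he⟩ := this; exact he (hall e))]
      ring
  calc (∑ o : ∀ j : Fin n, (∀ _e : {e : Fin n × Fin n // e ∈ E ∧ e.1 = j}, X j),
      ∑ z : ∀ j, Z j,
      ∏ j : Fin n,
        (if ∀ e, o j e = x j then (1 : ℝ) else 0) *
        Px j (z j) (i j) (x j) *
        Pz j (fun e => o e.1.1 ⟨e.1, e.2.1, rfl⟩) (z j))
      = ∑ o : ∀ j : Fin n, (∀ _e : {e : Fin n × Fin n // e ∈ E ∧ e.1 = j}, X j),
          if o = o₀ then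
            ∑ z : ∀ j, Z j, ∏ j : Fin n,
              Px j (z j) (i j) (x j) * Pz j (fun e => x e.1.1) (z j)
          else 0 := Finset.sum_congr rfl fun o _ => key o
    _ = ∑ z : ∀ j, Z j, ∏ j : Fin n,
          Px j (z j) (i j) (x j) * Pz j (fun e => x e.1.1) (z j) := by
          rw [Finset.sum_ite_eq' Finset.univ o₀]
          simp
    _ = ∏ j : Fin n,
        ∑ zj : Z j, Px j zj (i j) (x j) * Pz j (fun e => x e.1.1) zj := by
          rw [Finset.prod_univ_sum]
          rw [← Fintype.piFinset_univ]
end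

section
/- Given a classical causal model (DAG with conditional probabilities P(x_j | pa_j)), the diagonal process matrix W = ⊗_j T_j with T_j = Σ_{z_j, pa_j} P(z_j | pa_j) |pa_j⟩⟨pa_j| ⊗ |z_j⟩⟨z_j|, together with the rank-one diagonal instruments M_{x_j} = |x_j⟩⟨x_j| ⊗ ⊗_{e ∈ out(j)} |x_j⟩⟨x_j|, reproduces the classical joint distribution: Tr[⊗_j M_{x_j} · W] = Π_j P(x_j | pa_j). -/
open Matrix BigOperators

/-- Every classical causal model is the classical limit of a Markov quantum causal
model with the same causal structure: the diagonal process matrix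
`W = ⊗_j T_j`, `T_j = Σ_{z_j, pa_j} P(z_j|pa_j) |pa_j⟩⟨pa_j| ⊗ |z_j⟩⟨z_j|`, together
with the rank-one diagonal instruments
`M_{x_j} = |x_j⟩⟨x_j| ⊗ ⊗_{e ∈ out(j)} |x_j⟩⟨x_j|`, reproduces the classical joint
distribution: `Tr[⊗_j M_{x_j} · W] = Π_j P(x_j | pa_j)`. -/
theorem classical_model_from_quantum
    (n : ℕ) (E : Finset (Fin n × Fin n))
    (hacyclic : ∃ r : Fin n → ℕ, ∀ e ∈ E, r e.1 < r e.2)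
    (X : Fin n → Type) [∀ j, Fintype (X j)] [∀ j, DecidableEq (X j)]
    -- the classical conditional probabilities P(z_j | pa_j)
    (P : ∀ j : Fin n,
      (∀ e : {e : Fin n × Fin n // e ∈ E ∧ e.2 = j}, X e.1.1) → X j → ℝ)
    (hP0 : ∀ j pa z, 0 ≤ P j pa z)
    (hP1 : ∀ j pa, ∑ z, P j pa z = 1)
    -- the rank-one diagonal instruments M_{x_j}
    (Mloc : ∀ j : Fin n, X j →
      Matrix (X j × (∀ _e : {e : Fin n × Fin n // e ∈ E ∧ e.1 = j}, X j))
             (X j × (∀ _e : {e : Fin n × Fin n // e ∈ E ∧ e.1 = j}, X j)) ℂ)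
    (hMloc : ∀ j xj, Mloc j xj =
      Matrix.diagonal (fun p =>
        if p.1 = xj ∧ (∀ e, p.2 e = xj) then (1 : ℂ) else 0))
    -- the diagonal process matrix W = ⊗_j T_j
    (W : Matrix
      (∀ j : Fin n, X j × (∀ _e : {e : Fin n × Fin n // e ∈ E ∧ e.1 = j}, X j))
      (∀ j : Fin n, X j × (∀ _e : {e : Fin n × Fin n // e ∈ E ∧ e.1 = j}, X j)) ℂ)
    (hW : ∀ a b, W a b = if a = b then
      (((∏ j : Fin n,
        P j (fun e => (a e.1.1).2 ⟨e.1, e.2.1, rfl⟩) (a j).1 : ℝ)) : ℂ)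
      else 0)
    (x : ∀ j, X j) :
    ((Matrix.of fun (a b : ∀ j : Fin n, X j ×
        (∀ _e : {e : Fin n × Fin n // e ∈ E ∧ e.1 = j}, X j)) =>
      ∏ j : Fin n, Mloc j (x j) (a j) (b j)) * W).trace
    = ∏ j : Fin n, ((P j (fun e => x e.1.1) (x j) : ℝ) : ℂ) := by
  classical
  set a₀ : ∀ j : Fin n, X j × (∀ _e : {e : Fin n × Fin n // e ∈ E ∧ e.1 = j}, X j) :=
    fun j => (x j, fun _ => x j) with ha₀
  have key : ∀ a, ((Matrix.of fun (a b : ∀ j : Fin n, X j ×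
        (∀ _e : {e : Fin n × Fin n // e ∈ E ∧ e.1 = j}, X j)) =>
      ∏ j : Fin n, Mloc j (x j) (a j) (b j)) * W) a a =
      if a = a₀ then ∏ j : Fin n, ((P j (fun e => x e.1.1) (x j) : ℝ) : ℂ) else 0 := by
    intro a
    rw [Matrix.mul_apply]
    have hdiag : ∀ b, W b a = if b = a then W a a else 0 := by
      intro b
      by_cases h : b = a
      · simp [h]
      · rw [hW]; simp [h]
    have : ∑ b, (Matrix.of fun a b => ∏ j : Fin n, Mloc j (x j) (a j) (b j)) a b * W b a
        = (∏ j : Fin n, Mloc j (x j) (a j) (a j)) * W a a := by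
      rw [Finset.sum_eq_single a]
      · simp
      · intro b _ hb
        rw [hdiag b, if_neg hb, mul_zero]
      · simp
    rw [this]
    have hM : (∏ j : Fin n, Mloc j (x j) (a j) (a j)) =
        if a = a₀ then (1 : ℂ) else 0 := by
      by_cases h : a = a₀
      · subst h
        rw [Finset.prod_eq_one, if_pos rfl]
        intro j _
        rw [hMloc, Matrix.diagonal_apply_eq]
        simp [ha₀]
      · rw [if_neg h]
        have : ∃ j, a j ≠ a₀ j := by
          by_contra hc
          push_neg at hc
          exact h (funext hc)
        obtain ⟨j, hj⟩ := this
        apply Finset.prod_eq_zero (Finset.mem_univ j)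
        rw [hMloc, Matrix.diagonal_apply_eq, if_neg]
        intro ⟨h1, h2⟩
        exact hj (by rw [ha₀]; exact Prod.ext h1 (funext h2))
    rw [hM]
    by_cases h : a = a₀
    · subst h
      rw [if_pos rfl, if_pos rfl, one_mul, hW, if_pos rfl]
      push_cast
      rfl
    · rw [if_neg h, if_neg h, zero_mul]
  rw [Matrix.trace]
  simp only [Matrix.diag_apply, key]
  rw [Finset.sum_eq_single a₀]
  · rw [if_pos rfl]
  · intro b _ hb; rw [if_neg hb]
  · simp
end
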